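/- Convolution (Riccati) identity for Goss polynomials: for every integer k ≥ 0, Σ_{m+n=k} G_m·G_n = (k̄ − 1)·G_k in K[X], where the sum runs over the pairs of nonnegative integers (m,n) with m + n = k and k̄ ∈ K denotes the image of the integer k in K (i.e. k reduced mod p). Equivalently, the generating series F(t) = Σ_{m≥1} G_m·t^m ∈ K[X][[t]] satisfies F² = t·(dF/dt) − F. -/

import Mathlib

/-- `d_n = ∏_{j=0}^{n-1} (θ^{qⁿ} − θ^{q^j})` in `K = 𝔽_q(θ)` (with `d_0 = 1`). -/
noncomputable def dCoef (F : Type*) [Field F] (q n : ℕ) : RatFunc F :=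
  ∏ j ∈ Finset.range n,
    ((RatFunc.X : RatFunc F) ^ (q ^ n) - (RatFunc.X : RatFunc F) ^ (q ^ j))

/-- The Carlitz exponential series `e_C(t) = ∑_{i≥0} d_i⁻¹ t^{q^i} ∈ K[[t]]`:
its coefficient at `t^N` is `d_i⁻¹` if `N = q^i` and `0` otherwise. -/
noncomputable def carlitzExp (F : Type*) [Field F] (q : ℕ) : PowerSeries (RatFunc F) :=
  PowerSeries.mk fun N =>
    ∑ i ∈ Finset.range (N + 1), if q ^ i = N then (dCoef F q i)⁻¹ else 0

open PowerSeries in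
/-- Abstract Riccati lemma: if `E' = 1`, `E(0) = 0` and `Fs·(1 − c·E) = c·t`, then
`t·Fs' = Fs + Fs²`. -/
lemma riccati_aux {R : Type*} [CommRing R] [IsDomain R] (Fs E : R⟦X⟧) (c : R)
    (hDE : d⁄dX R E = 1) (hE0 : PowerSeries.constantCoeff (R := R) E = 0)
    (hGen : Fs * (1 - PowerSeries.C (R := R) c * E) = PowerSeries.C (R := R) c * PowerSeries.X) :
    PowerSeries.X * d⁄dX R Fs = Fs + Fs * Fs := by
  set U : R⟦X⟧ := 1 - PowerSeries.C (R := R) c * E with hU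
  have hDU : d⁄dX R U = - PowerSeries.C (R := R) c := by
    rw [hU, map_sub, Derivation.leibniz, hDE]
    simp [smul_eq_mul]
  have hder : Fs * d⁄dX R U + U * d⁄dX R Fs = PowerSeries.C (R := R) c := by
    have h := congrArg (d⁄dX R) hGen
    rw [Derivation.leibniz, Derivation.leibniz, derivative_X, derivative_C] at h
    simpa [smul_eq_mul, mul_comm] using h
  have hUD : U * d⁄dX R Fs = PowerSeries.C (R := R) c * (1 + Fs) := by
    rw [hDU] at hder
    linear_combination hder
  have h1 : U * (PowerSeries.X * d⁄dX R Fs - (Fs + Fs * Fs)) = 0 := by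
    have h2 : PowerSeries.X * (U * d⁄dX R Fs)
        = PowerSeries.X * (PowerSeries.C (R := R) c * (1 + Fs)) := by rw [hUD]
    calc U * (PowerSeries.X * d⁄dX R Fs - (Fs + Fs * Fs))
        = PowerSeries.X * (U * d⁄dX R Fs) - (Fs * U) * (1 + Fs) := by ring
      _ = PowerSeries.X * (PowerSeries.C (R := R) c * (1 + Fs))
          - (PowerSeries.C (R := R) c * PowerSeries.X) * (1 + Fs) := by rw [hUD, hGen]
      _ = 0 := by ring
  have hU0 : U ≠ 0 := by
    intro h
    have h3 := congrArg (PowerSeries.constantCoeff (R := R)) h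
    rw [hU] at h3
    simp only [map_sub, map_one, map_mul, PowerSeries.constantCoeff_C, map_zero, hE0,
      mul_zero, sub_zero] at h3
    exact one_ne_zero h3
  rcases mul_eq_zero.mp h1 with h | h
  · exact absurd h hU0
  · linear_combination h

open PowerSeries in
/-- In characteristic `p`, the derivative of the Carlitz exponential is 1. -/
lemma carlitzExp_deriv {F : Type*} [Field F]
    (p q e : ℕ) (hp : p.Prime) (he : 0 < e) (hq : q = p ^ e)
    [CharP (RatFunc F) p] :
    d⁄dX (Polynomial (RatFunc F))
      (PowerSeries.map (Polynomial.C : RatFunc F →+* Polynomial (RatFunc F))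
        (carlitzExp F q)) = 1 := by
  haveI : CharP (Polynomial (RatFunc F)) p :=
    charP_of_injective_ringHom Polynomial.C_injective p
  ext n
  rw [coeff_derivative, coeff_map, carlitzExp, coeff_mk, map_sum, Finset.sum_mul]
  have hterm : ∀ i ∈ Finset.range (n + 2),
      (Polynomial.C (if q ^ i = n + 1 then (dCoef F q i)⁻¹ else 0))
          * ((n : Polynomial (RatFunc F)) + 1)
        = if i = 0 ∧ n = 0 then 1 else 0 := by
    intro i _
    rcases eq_or_ne (q ^ i) (n + 1) with hqi | hqi
    · rw [if_pos hqi]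
      rcases Nat.eq_zero_or_pos i with hi | hi
      · subst hi
        simp only [pow_zero] at hqi
        have hn : n = 0 := by omega
        subst hn
        simp [dCoef]
      · have hdvd : p ∣ q ^ i := by
          rw [hq]; exact dvd_pow (dvd_pow_self p he.ne') (by omega)
        have hz : ((q ^ i : ℕ) : Polynomial (RatFunc F)) = 0 :=
          (CharP.cast_eq_zero_iff _ p _).mpr hdvd
        have h1 : ((n : Polynomial (RatFunc F)) + 1) = ((q ^ i : ℕ) : Polynomial (RatFunc F)) := by
          rw [hqi]; push_cast; ring
        rw [h1, hz, mul_zero]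
        have : ¬ (i = 0 ∧ n = 0) := by rintro ⟨h, _⟩; omega
        rw [if_neg this]
    · rw [if_neg hqi, map_zero, zero_mul]
      have : ¬ (i = 0 ∧ n = 0) := by
        rintro ⟨h1, h2⟩; subst h1; subst h2; simp at hqi
      rw [if_neg this]
  rw [Finset.sum_congr rfl hterm]
  rcases eq_or_ne n 0 with hn | hn
  · subst hn
    simp
  · rw [Finset.sum_eq_zero (by intro i _; rw [if_neg (by omega)]),
      PowerSeries.coeff_one, if_neg hn]

/-- Convolution (Riccati) identity for the Goss polynomials:
`∑_{m+n=k} G_m·G_n = (k̄ − 1)·G_k` for every `k ≥ 0`. -/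
theorem stmt_15 {F : Type*} [Field F] [Fintype F]
    (p q e : ℕ) (hp : p.Prime) (he : 0 < e) (hq : q = p ^ e)
    (hF : Fintype.card F = q)
    (G : ℕ → Polynomial (RatFunc F)) (hG0 : G 0 = 0)
    (hGen : (PowerSeries.mk fun m => G m) *
        (1 - PowerSeries.C (R := Polynomial (RatFunc F)) Polynomial.X *
          PowerSeries.map (Polynomial.C : RatFunc F →+* Polynomial (RatFunc F))
            (carlitzExp F q)) =
      PowerSeries.C (R := Polynomial (RatFunc F)) Polynomial.X * PowerSeries.X) :
    ∀ k : ℕ, ∑ mn ∈ Finset.HasAntidiagonal.antidiagonal k, G mn.1 * G mn.2 =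
      ((k : Polynomial (RatFunc F)) - 1) * G k := by
  classical
  have hcharF : CharP F p := by
    obtain ⟨n, hp', hcard⟩ := FiniteField.card F (ringChar F)
    have hpp : p ∣ ringChar F := by
      have : p ∣ ringChar F ^ (n : ℕ) := by
        rw [← hcard, hF, hq]; exact dvd_pow_self p (by omega)
      exact hp.dvd_of_dvd_pow this
    have : p = ringChar F := ((Nat.prime_dvd_prime_iff_eq hp hp').mp hpp)
    rw [this]; infer_instance
  haveI : CharP (RatFunc F) p :=
    charP_of_injective_ringHom (algebraMap F (RatFunc F)).injective p
  have hDE := carlitzExp_deriv (F := F) p q e hp he hq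
  have hE0 : PowerSeries.constantCoeff (R := Polynomial (RatFunc F))
      (PowerSeries.map (Polynomial.C : RatFunc F →+* Polynomial (RatFunc F))
        (carlitzExp F q)) = 0 := by
    rw [← PowerSeries.coeff_zero_eq_constantCoeff, PowerSeries.coeff_map, carlitzExp,
      PowerSeries.coeff_mk]
    simp
  have hkey := riccati_aux (PowerSeries.mk fun m => G m) _ Polynomial.X hDE hE0 hGen
  intro k
  rcases Nat.eq_zero_or_pos k with hk | hk
  · subst hk
    simp [hG0]
  · obtain ⟨k', rfl⟩ := Nat.exists_eq_succ_of_ne_zero hk.ne'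
    have hc := congrArg (PowerSeries.coeff (R := Polynomial (RatFunc F)) (k' + 1)) hkey
    rw [PowerSeries.coeff_succ_X_mul, PowerSeries.coeff_derivative, map_add,
      PowerSeries.coeff_mul] at hc
    simp only [PowerSeries.coeff_mk] at hc
    push_cast
    push_cast at hc
    linear_combination -hc
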